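/- Let X and B be nonempty finite types. Let ω be a quantum state on X × B with partial trace over X equal to (1 / (Fintype.card B : ℂ)) • (1 : Matrix B B ℂ), let Ω be a quantum channel from B to X whose Choi matrix equals ω, and let σ be a quantum state on B. Assume ω admits no symmetric two-sided extension: there is NO quantum state τ on X × B × X whose partial trace over the third factor equals ω and whose partial trace over the first factor, after the swap reindexing B × X ≃ X × B, equals ω. Define channels W₁ on X × B by W₁ ρ := (Ω (tr over the first factor of ρ)) ⊗ σ, and W₂ on B × X by W₂ ρ := σ ⊗ (Ω (tr over the second factor of ρ)). Then W₁ and W₂ are locally compatible (for every quantum state ρ₁ on X × B, the partial trace over the first factor of W₁ ρ₁ equals σ, and for every quantum state ρ₂ on B × X, the partial trace over the second factor of W₂ ρ₂ equals σ), yet there exists NO quantum channel 𝓕 from X × B × X to itself (factors labelled A, B, C with A = C = X) such that for every quantum state ρ on X × B × X, tr_C (𝓕 ρ) = W₁ (tr_C ρ) and tr_A (𝓕 ρ) = W₂ (tr_A ρ). -/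

import Mathlib

open Matrix Kronecker
open scoped ComplexOrder

noncomputable section

/-- A quantum state: positive semidefinite with unit trace. -/
def IsState {n : Type*} [Fintype n] (ρ : Matrix n n ℂ) : Prop :=
  ρ.PosSemidef ∧ ρ.trace = 1

/-- The Choi matrix of a linear map on matrices. -/
def choi {n m : Type*} [Fintype n] [DecidableEq n]
    (𝓔 : Matrix n n ℂ →ₗ[ℂ] Matrix m m ℂ) : Matrix (m × n) (m × n) ℂ :=
  Matrix.of fun p q =>
    (1 / (Fintype.card n : ℂ)) * 𝓔 (Matrix.single p.2 q.2 1) p.1 q.1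

/-- A quantum channel: trace preserving and completely positive. -/
def IsChannel {n m : Type*} [Fintype n] [DecidableEq n] [Fintype m]
    (𝓔 : Matrix n n ℂ →ₗ[ℂ] Matrix m m ℂ) : Prop :=
  (∀ ρ : Matrix n n ℂ, (𝓔 ρ).trace = ρ.trace) ∧ (choi 𝓔).PosSemidef

/-- Partial trace over the second (right) factor. -/
def trR {a b : Type*} [Fintype b] (M : Matrix (a × b) (a × b) ℂ) : Matrix a a ℂ :=
  Matrix.of fun i j => ∑ k, M (i, k) (j, k)

/-- Partial trace over the first (left) factor. -/
def trL {a b : Type*} [Fintype a] (M : Matrix (a × b) (a × b) ℂ) : Matrix b b ℂ :=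
  Matrix.of fun i j => ∑ k, M (k, i) (k, j)

/-- Partial trace over the third factor of a triple product. -/
def trC3 {a b c : Type*} [Fintype c] (M : Matrix (a × b × c) (a × b × c) ℂ) :
    Matrix (a × b) (a × b) ℂ :=
  Matrix.of fun i j => ∑ k, M (i.1, i.2, k) (j.1, j.2, k)


set_option linter.unusedSectionVars false
set_option maxHeartbeats 1600000

namespace QAux
open Matrix
open scoped ComplexOrder

variable {n m : Type*} [Fintype n] [DecidableEq n] [Fintype m]

lemma psd_add {A B : Matrix m m ℂ} (hA : A.PosSemidef) (hB : B.PosSemidef) :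
    (A + B).PosSemidef := by
  refine .of_dotProduct_mulVec_nonneg (hA.1.add hB.1) fun x => ?_
  have := add_nonneg (hA.dotProduct_mulVec_nonneg x) (hB.dotProduct_mulVec_nonneg x)
  simpa [add_mulVec, dotProduct_add] using this

lemma psd_sum {ι : Type*} (s : Finset ι) (f : ι → Matrix m m ℂ)
    (h : ∀ i ∈ s, (f i).PosSemidef) : (∑ i ∈ s, f i).PosSemidef :=
  Finset.sum_induction f _ (fun _ _ ha hb => psd_add ha hb) Matrix.PosSemidef.zero h

lemma psd_smul {A : Matrix m m ℂ} (hA : A.PosSemidef) {c : ℂ} (hc : 0 ≤ c) :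
    (c • A).PosSemidef := by
  have hcs : star c = c := by
    rw [Complex.star_def, Complex.conj_eq_iff_im]
    exact ((Complex.nonneg_iff).1 hc).2.symm
  refine .of_dotProduct_mulVec_nonneg ?_ fun x => ?_
  · unfold Matrix.IsHermitian
    rw [conjTranspose_smul, hcs, hA.1]
  · have h1 : star x ⬝ᵥ (c • A) *ᵥ x = c * (star x ⬝ᵥ A *ᵥ x) := by
      simp [smul_mulVec, dotProduct_smul]
    rw [h1]
    exact mul_nonneg hc (hA.dotProduct_mulVec_nonneg x)

lemma psd_diag_nonneg {A : Matrix m m ℂ} [DecidableEq m] (hA : A.PosSemidef) (i : m) :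
    0 ≤ A i i := by
  have := hA.dotProduct_mulVec_nonneg (Pi.single i 1)
  simpa [dotProduct, mulVec, Pi.single_apply, Finset.sum_ite_eq] using this

lemma psd_trace_nonneg {A : Matrix m m ℂ} [DecidableEq m] (hA : A.PosSemidef) :
    0 ≤ A.trace :=
  Finset.sum_nonneg fun i _ => psd_diag_nonneg hA i

lemma psd_trace_zero {A : Matrix m m ℂ} [DecidableEq m] (hA : A.PosSemidef)
    (h : A.trace = 0) : A = 0 := by
  have hd : ∀ i, A i i = 0 := by
    intro i
    exact (Finset.sum_eq_zero_iff_of_nonneg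
      (fun i _ => psd_diag_nonneg hA i)).1 h i (Finset.mem_univ i)
  ext j i
  have hcol : A *ᵥ Pi.single i 1 = 0 := by
    rw [← hA.dotProduct_mulVec_zero_iff]
    simpa [dotProduct, mulVec, Pi.single_apply, Finset.sum_ite_eq] using hd i
  have := congrFun hcol j
  simpa [mulVec, dotProduct, Pi.single_apply, Finset.sum_ite_eq] using this

/-- rank-one matrix -/
def rk1 (v : n → ℂ) : Matrix n n ℂ := Matrix.of fun i j => v i * star (v j)

lemma rk1_psd (v : n → ℂ) : (rk1 v).PosSemidef := by
  have : rk1 v = (Matrix.of fun (_ : Unit) j => star (v j))ᴴ *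
      (Matrix.of fun (_ : Unit) j => star (v j)) := by
    ext i j
    simp [rk1, Matrix.mul_apply]
  rw [this]
  exact posSemidef_conjTranspose_mul_self _

lemma polarization (x y : n → ℂ) :
    Matrix.of (fun i j => x i * star (y j)) =
      (4⁻¹ : ℂ) • (rk1 (x + y) + Complex.I • rk1 (x + Complex.I • y)
        - rk1 (x - y) - Complex.I • rk1 (x - Complex.I • y)) := by
  ext i j
  simp only [rk1, Matrix.of_apply, Matrix.smul_apply, Matrix.sub_apply, Matrix.add_apply,
    Pi.add_apply, Pi.sub_apply, Pi.smul_apply, star_add, star_sub, star_mul', smul_eq_mul,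
    Complex.star_def, _root_.map_mul, Complex.conj_I]
  ring_nf
  simp [Complex.I_sq]
  ring

lemma eq_on_states (F G : Matrix n n ℂ →ₗ[ℂ] Matrix m m ℂ)
    (h : ∀ ρ, IsState ρ → F ρ = G ρ) (M : Matrix n n ℂ) : F M = G M := by
  have hpsd : ∀ P : Matrix n n ℂ, P.PosSemidef → F P = G P := by
    intro P hP
    by_cases ht : P.trace = 0
    · rw [psd_trace_zero hP ht]; simp
    · have htnn := psd_trace_nonneg hP
      obtain ⟨r, hr0, hrt⟩ : ∃ r : ℝ, 0 ≤ r ∧ P.trace = (r : ℂ) := by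
        rcases (Complex.nonneg_iff).1 htnn with ⟨h1, h2⟩
        exact ⟨P.trace.re, h1, (Complex.ext rfl h2.symm)⟩
      have hrne : (r : ℂ) ≠ 0 := hrt ▸ ht
      have hstate : IsState ((r : ℂ)⁻¹ • P) := by
        refine ⟨psd_smul hP ?_, ?_⟩
        · rw [← Complex.ofReal_inv]
          exact_mod_cast Complex.zero_le_real.mpr (inv_nonneg.2 hr0)
        · rw [trace_smul, hrt, smul_eq_mul, inv_mul_cancel₀ hrne]
      have := h _ hstate
      have hPr : P = (r : ℂ) • ((r : ℂ)⁻¹ • P) := by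
        rw [smul_smul, mul_inv_cancel₀ hrne, one_smul]
      calc F P = F ((r:ℂ) • ((r:ℂ)⁻¹ • P)) := by rw [← hPr]
        _ = (r:ℂ) • F ((r:ℂ)⁻¹ • P) := LinearMap.map_smul F _ _
        _ = (r:ℂ) • G ((r:ℂ)⁻¹ • P) := by rw [this]
        _ = G ((r:ℂ) • ((r:ℂ)⁻¹ • P)) := (LinearMap.map_smul G _ _).symm
        _ = G P := by rw [← hPr]
  have hstd : ∀ k l : n, F (single k l 1) = G (single k l 1) := by
    intro k l
    have hE : single k l (1 : ℂ) =
        Matrix.of (fun i j => (Pi.single k 1 : n → ℂ) i * star ((Pi.single l 1 : n → ℂ) j)) := by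
      ext i j
      simp [single, Pi.single_apply, ite_and, eq_comm]
      split_ifs <;> rfl
    rw [hE, polarization]
    simp only [LinearMap.map_smul, map_sub, map_add]
    rw [hpsd _ (rk1_psd _), hpsd _ (rk1_psd _), hpsd _ (rk1_psd _), hpsd _ (rk1_psd _)]
  rw [matrix_eq_sum_single M, map_sum, map_sum]
  refine Finset.sum_congr rfl fun k _ => ?_
  rw [map_sum, map_sum]
  refine Finset.sum_congr rfl fun l _ => ?_
  have hsm : single k l (M k l) = M k l • single k l (1:ℂ) := by
    rw [smul_single, smul_eq_mul, mul_one]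
  calc F (single k l (M k l)) = M k l • F (single k l 1) := by
        rw [hsm]; exact LinearMap.map_smul F _ _
    _ = M k l • G (single k l 1) := by rw [hstd]
    _ = G (single k l (M k l)) := by rw [hsm]; exact (LinearMap.map_smul G _ _).symm

section PT
open Kronecker
variable {a b c : Type*} [Fintype a] [Fintype b] [Fintype c]

def trLL : Matrix (a × b) (a × b) ℂ →ₗ[ℂ] Matrix b b ℂ where
  toFun := trL
  map_add' M N := by ext i j; simp [trL, Finset.sum_add_distrib]
  map_smul' r M := by ext i j; simp [trL, Finset.mul_sum]

def trC3L : Matrix (a × b × c) (a × b × c) ℂ →ₗ[ℂ] Matrix (a × b) (a × b) ℂ where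
  toFun := trC3
  map_add' M N := by ext i j; simp [trC3, Finset.sum_add_distrib]
  map_smul' r M := by ext i j; simp [trC3, Finset.mul_sum]

lemma trace_trL (M : Matrix (a × b) (a × b) ℂ) : (trL M).trace = M.trace := by
  rw [show M.trace = ∑ p : a × b, M p p from rfl, Fintype.sum_prod_type]
  rw [show (trL M).trace = ∑ i, ∑ k, M (k, i) (k, i) from rfl]
  exact Finset.sum_comm

lemma trace_trR (M : Matrix (a × b) (a × b) ℂ) : (trR M).trace = M.trace := by
  simp [trR, Matrix.trace, Matrix.diag, Fintype.sum_prod_type]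

lemma trace_trC3 (M : Matrix (a × b × c) (a × b × c) ℂ) : (trC3 M).trace = M.trace := by
  simp [trC3, Matrix.trace, Matrix.diag, Fintype.sum_prod_type]

lemma trL_kron (A : Matrix a a ℂ) (B : Matrix b b ℂ) :
    trL (A ⊗ₖ B) = A.trace • B := by
  ext i j
  simp [trL, Matrix.trace, Matrix.diag, kroneckerMap_apply, Finset.sum_mul]

lemma trR_kron (A : Matrix a a ℂ) (B : Matrix b b ℂ) :
    trR (A ⊗ₖ B) = B.trace • A := by
  ext i j
  simp [trR, Matrix.trace, Matrix.diag, kroneckerMap_apply, Finset.mul_sum, mul_comm]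

end PT

lemma apply_eq {n m : Type*} [Fintype n] [DecidableEq n] [Fintype m]
    (𝓔 : Matrix n n ℂ →ₗ[ℂ] Matrix m m ℂ) (hn : (Fintype.card n : ℂ) ≠ 0)
    (M : Matrix n n ℂ) (i j : m) :
    𝓔 M i j = (Fintype.card n : ℂ) * ∑ k, ∑ l, M k l * choi 𝓔 (i,k) (j,l) := by
  have expand : 𝓔 M i j = ∑ k, ∑ l, M k l * 𝓔 (single k l 1) i j := by
    conv_lhs => rw [matrix_eq_sum_single M]
    rw [map_sum, Matrix.sum_apply]
    refine Finset.sum_congr rfl fun k _ => ?_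
    rw [map_sum, Matrix.sum_apply]
    refine Finset.sum_congr rfl fun l _ => ?_
    have : single k l (M k l) = M k l • single k l (1:ℂ) := by
      rw [smul_single, smul_eq_mul, mul_one]
    rw [this, LinearMap.map_smul]
    simp
  rw [expand, Finset.mul_sum]
  refine Finset.sum_congr rfl fun k _ => ?_
  rw [Finset.mul_sum]
  refine Finset.sum_congr rfl fun l _ => ?_
  simp only [choi, Matrix.of_apply]
  field_simp

end QAux

/-- If the Choi state `ω` of `Ω` has no symmetric two-sided extension, then the channels
`W₁ ρ = Ω(tr_X ρ) ⊗ σ` and `W₂ ρ = σ ⊗ Ω(tr_X ρ)` are locally compatible but not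
compatible (Proposition 2 of the appendix). -/
theorem unextendible_choi_gives_incompatible_channels
    {X B : Type*} [Fintype X] [DecidableEq X] [Nonempty X]
    [Fintype B] [DecidableEq B] [Nonempty B]
    (ω : Matrix (X × B) (X × B) ℂ) (hω : IsState ω)
    (hωmarg : trL ω = (1 / (Fintype.card B : ℂ)) • (1 : Matrix B B ℂ))
    (Ω : Matrix B B ℂ →ₗ[ℂ] Matrix X X ℂ) (hΩ : IsChannel Ω) (hΩchoi : choi Ω = ω)
    (σ : Matrix B B ℂ) (hσ : IsState σ)
    (hext : ¬ ∃ τ : Matrix (X × B × X) (X × B × X) ℂ, IsState τ ∧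
      trC3 τ = ω ∧ (trL τ).submatrix Prod.swap Prod.swap = ω)
    (W₁ : Matrix (X × B) (X × B) ℂ →ₗ[ℂ] Matrix (X × B) (X × B) ℂ)
    (hW₁ : ∀ ρ : Matrix (X × B) (X × B) ℂ, W₁ ρ = Ω (trL ρ) ⊗ₖ σ)
    (W₂ : Matrix (B × X) (B × X) ℂ →ₗ[ℂ] Matrix (B × X) (B × X) ℂ)
    (hW₂ : ∀ ρ : Matrix (B × X) (B × X) ℂ, W₂ ρ = σ ⊗ₖ Ω (trR ρ)) :
    ((∀ ρ₁ : Matrix (X × B) (X × B) ℂ, IsState ρ₁ → trL (W₁ ρ₁) = σ) ∧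
     (∀ ρ₂ : Matrix (B × X) (B × X) ℂ, IsState ρ₂ → trR (W₂ ρ₂) = σ)) ∧
    ¬ ∃ 𝓕 : Matrix (X × B × X) (X × B × X) ℂ →ₗ[ℂ] Matrix (X × B × X) (X × B × X) ℂ,
        IsChannel 𝓕 ∧ ∀ ρ : Matrix (X × B × X) (X × B × X) ℂ, IsState ρ →
          trC3 (𝓕 ρ) = W₁ (trC3 ρ) ∧ trL (𝓕 ρ) = W₂ (trL ρ) := by
  classical
  have hcardB : (Fintype.card B : ℂ) ≠ 0 := Nat.cast_ne_zero.mpr Fintype.card_ne_zero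
  have hcardX : (Fintype.card X : ℂ) ≠ 0 := Nat.cast_ne_zero.mpr Fintype.card_ne_zero
  constructor
  · constructor
    · intro ρ₁ hρ₁
      rw [hW₁, QAux.trL_kron, hΩ.1, QAux.trace_trL, hρ₁.2, one_smul]
    · intro ρ₂ hρ₂
      rw [hW₂, QAux.trR_kron, hΩ.1, QAux.trace_trR, hρ₂.2, one_smul]
  · rintro ⟨𝓕, h𝓕, hcomp⟩
    set N : ℂ := (Fintype.card (X × B × X) : ℂ) with hNdef
    have hN : N ≠ 0 := Nat.cast_ne_zero.mpr Fintype.card_ne_zero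
    -- upgrade the compatibility conditions from states to all matrices
    have hc1 : ∀ M, trC3 (𝓕 M) = W₁ (trC3 M) := fun M =>
      QAux.eq_on_states (QAux.trC3L.comp 𝓕) (W₁.comp QAux.trC3L)
        (fun ρ hρ => (hcomp ρ hρ).1) M
    have hc2 : ∀ M, trL (𝓕 M) = W₂ (trL M) := fun M =>
      QAux.eq_on_states (QAux.trLL.comp 𝓕) (W₂.comp QAux.trLL)
        (fun ρ hρ => (hcomp ρ hρ).2) M
    -- the input slices
    set Ψs : B → B → Matrix (X × B × X) (X × B × X) ℂ := fun b₀ b₀' =>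
      Matrix.of fun k l => (1/N) *
        ((if k.2.1 = b₀ then 1 else 0) * (if l.2.1 = b₀' then 1 else 0) *
         (if l.1 = k.1 then 1 else 0) * (if l.2.2 = k.2.2 then 1 else 0)) with hΨs
    -- the candidate two-sided extension
    set τ : Matrix (X × B × X) (X × B × X) ℂ := Matrix.of fun i j =>
      ∑ b, 𝓕 (Ψs i.2.1 j.2.1) (i.1, b, i.2.2) (j.1, b, j.2.2) with hτdef
    -- applying 𝓕 to a slice in terms of the Choi matrix
    have A1 : ∀ (b₀ b₀' : B) (p q : X × B × X), 𝓕 (Ψs b₀ b₀') p q =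
        ∑ α, ∑ γ, choi 𝓕 (p, (α, b₀, γ)) (q, (α, b₀', γ)) := by
      intro b₀ b₀' p q
      rw [QAux.apply_eq 𝓕 hN]
      have hcollapse : (∑ k, ∑ l, Ψs b₀ b₀' k l * choi 𝓕 (p,k) (q,l))
          = ∑ α, ∑ γ, (1/N) * choi 𝓕 (p, (α, b₀, γ)) (q, (α, b₀', γ)) := by
        simp only [hΨs, Matrix.of_apply, Fintype.sum_prod_type, ite_mul, mul_ite,
          one_mul, mul_one, zero_mul, mul_zero, Finset.sum_ite_eq, Finset.sum_ite_eq',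
          Finset.sum_ite_irrel, Finset.sum_const_zero, Finset.mem_univ, if_true]
      rw [hcollapse, Finset.mul_sum]
      refine Finset.sum_congr rfl fun α _ => ?_
      rw [Finset.mul_sum]
      refine Finset.sum_congr rfl fun γ _ => ?_
      rw [← mul_assoc, mul_one_div, div_self hN, one_mul]
    -- the selection matrices
    set U : B → X → X → Matrix ((X × B × X) × (X × B × X)) (X × B × X) ℂ :=
      fun b α γ => Matrix.of fun r s =>
        if r = ((s.1, b, s.2.2), (α, s.2.1, γ)) then 1 else 0 with hU
    have A2 : ∀ (b : B) (α γ : X) (i j : X × B × X),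
        ((U b α γ)ᴴ * choi 𝓕 * (U b α γ)) i j =
          choi 𝓕 ((i.1, b, i.2.2), (α, i.2.1, γ)) ((j.1, b, j.2.2), (α, j.2.1, γ)) := by
      intro b α γ i j
      simp only [Matrix.mul_apply, Matrix.conjTranspose_apply, hU, Matrix.of_apply,
        apply_ite (star : ℂ → ℂ), star_one, star_zero, ite_mul, mul_ite, one_mul,
        mul_one, zero_mul, mul_zero, Finset.sum_ite_eq, Finset.sum_ite_eq',
        Finset.mem_univ, if_true]
    -- τ as a positive combination of conjugations of the Choi matrix of 𝓕
    have hτ_conj : τ = ∑ b, ∑ α, ∑ γ, (U b α γ)ᴴ * choi 𝓕 * (U b α γ) := by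
      ext i j
      rw [hτdef]
      simp only [Matrix.of_apply, Matrix.sum_apply]
      rw [Finset.sum_congr rfl fun b _ => A1 i.2.1 j.2.1 (i.1, b, i.2.2) (j.1, b, j.2.2)]
      refine Finset.sum_congr rfl fun b _ => ?_
      refine Finset.sum_congr rfl fun α _ => ?_
      refine Finset.sum_congr rfl fun γ _ => ?_
      exact (A2 b α γ i j).symm
    have hτpsd : τ.PosSemidef := by
      rw [hτ_conj]
      refine QAux.psd_sum _ _ fun b _ => QAux.psd_sum _ _ fun α _ =>
        QAux.psd_sum _ _ fun γ _ => ?_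
      exact (h𝓕.2).conjTranspose_mul_mul_same _
    -- marginals of the slices
    have key1 : ∀ b₀ b₀', trL (trC3 (Ψs b₀ b₀')) =
        (1/(Fintype.card B : ℂ)) • Matrix.single b₀ b₀' (1:ℂ) := by
      intro b₀ b₀'
      ext β β'
      have hNval : N = (Fintype.card X : ℂ) * ((Fintype.card B : ℂ) * (Fintype.card X : ℂ)) := by
        rw [hNdef, Fintype.card_prod, Fintype.card_prod]
        push_cast
        ring
      simp only [trL, trC3, hΨs, Matrix.of_apply, Matrix.smul_apply,
        Matrix.single, smul_eq_mul]
      rcases eq_or_ne β b₀ with rfl | h1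
      · rcases eq_or_ne β' b₀' with rfl | h2
        · simp [Finset.sum_const]
          rw [hNval]
          field_simp
        · simp [Ne.symm h2, h2]
      · simp [Ne.symm h1, h1]
    have key2 : ∀ b₀ b₀', trR (trL (Ψs b₀ b₀')) =
        (1/(Fintype.card B : ℂ)) • Matrix.single b₀ b₀' (1:ℂ) := by
      intro b₀ b₀'
      ext β β'
      have hNval : N = (Fintype.card X : ℂ) * ((Fintype.card B : ℂ) * (Fintype.card X : ℂ)) := by
        rw [hNdef, Fintype.card_prod, Fintype.card_prod]
        push_cast
        ring
      simp only [trL, trR, hΨs, Matrix.of_apply, Matrix.smul_apply,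
        Matrix.single, smul_eq_mul]
      rcases eq_or_ne β b₀ with rfl | h1
      · rcases eq_or_ne β' b₀' with rfl | h2
        · simp [Finset.sum_const]
          rw [hNval]
          field_simp
        · simp [Ne.symm h2, h2]
      · simp [Ne.symm h1, h1]
    have hmargE : ∀ (b₀ b₀' : B) (a a' : X),
        Ω ((1/(Fintype.card B : ℂ)) • Matrix.single b₀ b₀' (1:ℂ)) a a' =
          ω (a, b₀) (a', b₀') := by
      intro b₀ b₀' a a'
      rw [LinearMap.map_smul, ← hΩchoi]
      simp [choi]
    -- the two marginal conditions for τ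
    have htrC3 : trC3 τ = ω := by
      ext i j
      have h1 : trC3 τ i j = trR (trC3 (𝓕 (Ψs i.2 j.2))) i.1 j.1 := by
        simp only [trC3, trR, hτdef, Matrix.of_apply]
        exact Finset.sum_comm
      rw [h1, hc1, hW₁, key1, QAux.trR_kron, hσ.2, one_smul, hmargE]
    have hswap : (trL τ).submatrix Prod.swap Prod.swap = ω := by
      ext i j
      have h1 : ((trL τ).submatrix Prod.swap Prod.swap) i j =
          trL (trL (𝓕 (Ψs i.2 j.2))) i.1 j.1 := by
        simp only [Matrix.submatrix_apply, Prod.swap, trL, hτdef, Matrix.of_apply]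
        exact Finset.sum_comm
      rw [h1, hc2, hW₂, key2, QAux.trL_kron, hσ.2, one_smul, hmargE]
    have hstate : IsState τ := by
      refine ⟨hτpsd, ?_⟩
      rw [← QAux.trace_trC3 τ, htrC3, hω.2]
    exact hext ⟨τ, hstate, htrC3, hswap⟩
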